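/- Let F : U → U be a p-periodic C¹-diffeomorphism of an open set U ⊆ 𝕂^k with fixed point x₀. Then the map ψ(x) = (1/p) ∑_{i=0}^{p-1} (DF(x₀))^{-i}(F^i(x)) satisfies ψ ∘ F = L ∘ ψ near x₀, where L(x) = DF(x₀)·x, and Dψ(x₀) = Id, so ψ is a local diffeomorphism linearizing F near x₀ (Montgomery–Bochner theorem, smooth fixed-point version). -/

import Mathlib

/-- Montgomery–Bochner theorem (smooth fixed-point version): if `F` is a
`p`-periodic `C¹` diffeomorphism of an open set `U` with fixed point `x₀`,
then `ψ(x) = (1/p) ∑_{i<p} (DF(x₀))⁻ⁱ (Fⁱ(x))` conjugates `F` to its linear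
part near `x₀`, and `Dψ(x₀) = Id`, so `ψ` is a local diffeomorphism
linearizing `F` near `x₀`. -/
theorem stmt_1 {𝕜 : Type} [RCLike 𝕜] {k : ℕ} {U : Set (Fin k → 𝕜)}
    (hU : IsOpen U) (F Finv : (Fin k → 𝕜) → (Fin k → 𝕜))
    (hmaps : Set.MapsTo F U U) (hC1 : ContDiffOn 𝕜 1 F U)
    (hinvmaps : Set.MapsTo Finv U U) (hinvC1 : ContDiffOn 𝕜 1 Finv U)
    (hinv : ∀ x ∈ U, Finv (F x) = x ∧ F (Finv x) = x)
    (x₀ : Fin k → 𝕜) (hx₀ : x₀ ∈ U) (hfix : F x₀ = x₀)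
    (p : ℕ) (hp : 0 < p) (hper : ∀ x ∈ U, F^[p] x = x)
    (ψ : (Fin k → 𝕜) → (Fin k → 𝕜))
    (hψ : ∀ x, ψ x = (p : 𝕜)⁻¹ •
      ∑ i ∈ Finset.range p, (Ring.inverse (fderiv 𝕜 F x₀) ^ i) (F^[i] x)) :
    (∀ᶠ x in nhds x₀, ψ (F x) = fderiv 𝕜 F x₀ (ψ x)) ∧
      fderiv 𝕜 ψ x₀ = ContinuousLinearMap.id 𝕜 (Fin k → 𝕜) := by
  set A := fderiv 𝕜 F x₀ with hA
  have hUnhds : U ∈ nhds x₀ := hU.mem_nhds hx₀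
  have hdiffU : ∀ x ∈ U, DifferentiableAt 𝕜 F x := fun x hx =>
    ((hC1.differentiableOn one_ne_zero) x hx).differentiableAt (hU.mem_nhds hx)
  have hfixiter : ∀ i, F^[i] x₀ = x₀ := fun i => Function.iterate_fixed hfix i
  -- derivative of iterates at the fixed point
  have hiter : ∀ i, HasFDerivAt (F^[i]) (A ^ i) x₀ := by
    intro i
    induction i with
    | zero => simpa [ContinuousLinearMap.one_def] using hasFDerivAt_id (𝕜 := 𝕜) x₀
    | succ n ih =>
      have h1 : HasFDerivAt F A (F^[n] x₀) := by
        rw [hfixiter n]; exact (hdiffU x₀ hx₀).hasFDerivAt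
      have h2 := h1.comp x₀ ih
      have h3 : A.comp (A ^ n) = A ^ (n + 1) := by rw [pow_succ']; rfl
      rw [Function.iterate_succ']
      exact h3 ▸ h2
  have hAp : A ^ p = 1 := by
    have h1 : F^[p] =ᶠ[nhds x₀] id :=
      Filter.eventuallyEq_of_mem hUnhds (fun x hx => hper x hx)
    have h2 : HasFDerivAt (F^[p]) (1 : (Fin k → 𝕜) →L[𝕜] (Fin k → 𝕜)) x₀ := by
      have h := hasFDerivAt_id (𝕜 := 𝕜) x₀
      rw [← ContinuousLinearMap.one_def] at h
      exact h.congr_of_eventuallyEq h1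
    exact (hiter p).unique h2
  have hApred : A * A ^ (p - 1) = 1 := by
    rw [← pow_succ', Nat.sub_add_cancel hp]; exact hAp
  have hpredA : A ^ (p - 1) * A = 1 := by
    rw [← pow_succ, Nat.sub_add_cancel hp]; exact hAp
  set B := A ^ (p - 1) with hBdef
  have hBinv : Ring.inverse A = B := by
    have hu : Ring.inverse (↑(⟨A, B, hApred, hpredA⟩ : ((Fin k → 𝕜) →L[𝕜] (Fin k → 𝕜))ˣ)) =
        (↑(⟨A, B, hApred, hpredA⟩ : ((Fin k → 𝕜) →L[𝕜] (Fin k → 𝕜))ˣ)⁻¹ :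
          (Fin k → 𝕜) →L[𝕜] (Fin k → 𝕜)) := Ring.inverse_unit _
    simpa using hu
  have hBA : ∀ i, B ^ i * A ^ i = 1 := by
    intro i
    rw [hBdef, ← pow_mul, ← pow_add]
    have h : (p - 1) * i + i = p * i := by
      conv_rhs => rw [← Nat.sub_add_cancel hp]
      ring
    rw [h, pow_mul, hAp, one_pow]
  have hBp : B ^ p = 1 := by
    rw [hBdef, ← pow_mul, mul_comm, pow_mul, hAp, one_pow]
  have hAB : ∀ i, A * B ^ (i + 1) = B ^ i := by
    intro i
    rw [pow_succ', ← mul_assoc, hApred, one_mul]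
  constructor
  · filter_upwards [hUnhds] with x hx
    rw [hψ (F x), hψ x, hBinv, map_smul]
    congr 1
    have key : ∀ i, (B ^ i) (F^[i] (F x)) = A ((B ^ (i + 1)) (F^[i + 1] x)) := by
      intro i
      rw [← Function.iterate_succ_apply]
      have h : A ((B ^ (i + 1)) (F^[i + 1] x)) = (A * B ^ (i + 1)) (F^[i + 1] x) := rfl
      rw [h, hAB]
    have shift : ∑ i ∈ Finset.range p, (B ^ (i + 1)) (F^[i + 1] x)
        = ∑ i ∈ Finset.range p, (B ^ i) (F^[i] x) := by
      have h1 := Finset.sum_range_succ' (fun i => (B ^ i) (F^[i] x)) p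
      have h2 := Finset.sum_range_succ (fun i => (B ^ i) (F^[i] x)) p
      have hg0 : (B ^ 0) (F^[0] x) = x := by simp
      have hgp : (B ^ p) (F^[p] x) = x := by rw [hBp, hper x hx]; simp
      simp only [hg0, hgp] at h1 h2
      have := h1.symm.trans h2
      exact add_right_cancel this
    calc ∑ i ∈ Finset.range p, (B ^ i) (F^[i] (F x))
        = ∑ i ∈ Finset.range p, A ((B ^ (i + 1)) (F^[i + 1] x)) :=
          Finset.sum_congr rfl fun i _ => key i
      _ = A (∑ i ∈ Finset.range p, (B ^ (i + 1)) (F^[i + 1] x)) := (map_sum A _ _).symm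
      _ = A (∑ i ∈ Finset.range p, (B ^ i) (F^[i] x)) := by rw [shift]
  · have hterm : ∀ i, HasFDerivAt (fun x => (B ^ i) (F^[i] x)) ((B ^ i).comp (A ^ i)) x₀ :=
      fun i => ((B ^ i).hasFDerivAt).comp x₀ (hiter i)
    have hsum : HasFDerivAt (fun x => ∑ i ∈ Finset.range p, (B ^ i) (F^[i] x))
        (∑ i ∈ Finset.range p, (B ^ i).comp (A ^ i)) x₀ :=
      HasFDerivAt.fun_sum (fun i _ => hterm i)
    have hψdef : ψ = fun x => (p : 𝕜)⁻¹ • ∑ i ∈ Finset.range p, (B ^ i) (F^[i] x) := by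
      funext x; rw [hψ x, hBinv]
    have hd : HasFDerivAt ψ
        ((p : 𝕜)⁻¹ • ∑ i ∈ Finset.range p, (B ^ i).comp (A ^ i)) x₀ := by
      rw [hψdef]; exact hsum.fun_const_smul _
    have heq : ((p : 𝕜)⁻¹ • ∑ i ∈ Finset.range p, (B ^ i).comp (A ^ i))
        = ContinuousLinearMap.id 𝕜 (Fin k → 𝕜) := by
      have h1 : ∀ i ∈ Finset.range p, (B ^ i).comp (A ^ i)
          = (1 : (Fin k → 𝕜) →L[𝕜] (Fin k → 𝕜)) := fun i _ => hBA i
      rw [Finset.sum_congr rfl h1, Finset.sum_const, Finset.card_range]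
      have hcast : (p • (1 : (Fin k → 𝕜) →L[𝕜] (Fin k → 𝕜)))
          = (p : 𝕜) • (1 : (Fin k → 𝕜) →L[𝕜] (Fin k → 𝕜)) := by
        exact (Nat.cast_smul_eq_nsmul 𝕜 p (1 : (Fin k → 𝕜) →L[𝕜] (Fin k → 𝕜))).symm
      have hpne : (p : 𝕜) ≠ 0 := by exact_mod_cast hp.ne'
      rw [hcast, smul_smul, inv_mul_cancel₀ hpne, one_smul, ContinuousLinearMap.one_def]
    rw [hd.fderiv, heq]
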